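/- arXiv:2511.01089 — 2 statements merged into one kernel-verified Lean document; each statement's English description precedes it below -/
import Mathlib

section
/- Let f : ℝⁿ → ℝ ∪ {+∞} be a proper convex function that is symmetric (f(x) = f(Px) for every n×n permutation matrix P), with associated spectral vector cone K_f and spectral matrix cone K_F. Then for every (t̄, v̄, X̄) ∈ ℝ × ℝ × Sⁿ, the Euclidean distance from (t̄, v̄, X̄) to K_F equals the Euclidean distance from (t̄, v̄, λ(X̄)) to K_f, where λ(X̄) ∈ ℝⁿ is the vector of eigenvalues of X̄ in nonincreasing order. -/
open Matrix Finset

/-- The entries of `x` sorted in nonincreasing order. -/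
noncomputable def sortDesc {n : ℕ} (x : Fin n → ℝ) : Fin n → ℝ :=
  fun i => (x ∘ Tuple.sort x) i.rev

open Classical in
/-- The eigenvalues of a real symmetric matrix in nonincreasing order
(junk value `0` if the matrix is not symmetric). -/
noncomputable def eigsDesc {n : ℕ} (X : Matrix (Fin n) (Fin n) ℝ) : Fin n → ℝ :=
  if h : X.IsHermitian then sortDesc h.eigenvalues else 0

/-- The spectral vector cone `K_f` associated with the proper convex function with
value `f` on its domain `S` (and `+∞` outside `S`). -/
def vecCone {n : ℕ} (S : Set (Fin n → ℝ)) (f : (Fin n → ℝ) → ℝ) :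
    Set (ℝ × ℝ × (Fin n → ℝ)) :=
  closure {p | 0 < p.2.1 ∧ p.2.1⁻¹ • p.2.2 ∈ S ∧ p.2.1 * f (p.2.1⁻¹ • p.2.2) ≤ p.1}

/-- The spectral matrix cone `K_F`, where `F X = f (λ(X))` with `λ(X)` the eigenvalues
of the symmetric matrix `X` in nonincreasing order. -/
noncomputable def matCone {n : ℕ} (S : Set (Fin n → ℝ)) (f : (Fin n → ℝ) → ℝ) :
    Set (ℝ × ℝ × Matrix (Fin n) (Fin n) ℝ) :=
  closure {p | p.2.2.IsHermitian ∧ 0 < p.2.1 ∧ p.2.1⁻¹ • eigsDesc p.2.2 ∈ S ∧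
    p.2.1 * f (p.2.1⁻¹ • eigsDesc p.2.2) ≤ p.1}


lemma sortDesc_comp_perm {n : ℕ} (x : Fin n → ℝ) (σ : Equiv.Perm (Fin n)) :
    sortDesc (x ∘ σ) = sortDesc x := by
  funext i
  have h := Tuple.comp_perm_comp_sort_eq_comp_sort (σ := σ) (f := x)
  simp only [sortDesc]
  rw [show (x ∘ σ) ∘ Tuple.sort (x ∘ σ) = (x ∘ ⇑σ) ∘ ⇑(Tuple.sort (x ∘ ⇑σ)) from rfl, h]

lemma exists_perm_sortDesc {n : ℕ} (x : Fin n → ℝ) :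
    ∃ σ : Equiv.Perm (Fin n), sortDesc x = x ∘ σ :=
  ⟨Fin.revPerm.trans (Tuple.sort x), rfl⟩

lemma antitone_sortDesc {n : ℕ} (x : Fin n → ℝ) : Antitone (sortDesc x) := by
  intro i j hij
  exact Tuple.monotone_sort x (by simpa [Fin.rev_le_rev] using hij)

lemma sortDesc_eq_self_of_antitone {n : ℕ} {d : Fin n → ℝ} (hd : Antitone d) :
    sortDesc d = d := by
  have h1 : Monotone (d ∘ ⇑(Tuple.sort d)) := Tuple.monotone_sort d
  have h2 : Monotone (d ∘ ⇑(Fin.revPerm : Equiv.Perm (Fin n))) := by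
    intro i j hij
    exact hd (by simpa [Fin.rev_le_rev] using hij)
  have := Tuple.unique_monotone h1 h2
  funext i
  have : (d ∘ ⇑(Tuple.sort d)) i.rev = (d ∘ ⇑(Fin.revPerm : Equiv.Perm (Fin n))) i.rev :=
    congrFun this i.rev
  simpa [sortDesc, Fin.rev_rev] using this


lemma exists_comp_perm_of_ofFn_perm : ∀ {n : ℕ} {α : Type} (d e : Fin n → α),
    (List.ofFn d).Perm (List.ofFn e) → ∃ σ : Equiv.Perm (Fin n), d = e ∘ σ := by
  intro n
  induction n with
  | zero => intro α d e _; exact ⟨Equiv.refl _, funext fun i => i.elim0⟩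
  | succ n ih =>
    intro α d e h
    have hd0 : d 0 ∈ List.ofFn e := h.subset (by simp [List.mem_ofFn])
    rw [List.mem_ofFn] at hd0
    obtain ⟨j, hj⟩ := hd0
    -- permutation ρ with ρ 0 = j, ρ i.succ = j.succAbove i
    let ρ : Equiv.Perm (Fin (n+1)) := (finSuccEquiv n).trans (finSuccEquiv' j).symm
    have hρ0 : ρ 0 = j := by simp [ρ]
    have hρs : ∀ i : Fin n, ρ i.succ = j.succAbove i := by intro i; simp [ρ]
    let e₁ : Fin (n+1) → α := e ∘ ρ
    have he₁ : (List.ofFn e₁).Perm (List.ofFn e) := Equiv.Perm.ofFn_comp_perm ρ e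
    have h' : (List.ofFn d).Perm (List.ofFn e₁) := h.trans he₁.symm
    have hd' : List.ofFn d = d 0 :: List.ofFn (fun i : Fin n => d i.succ) := List.ofFn_succ
    have he' : List.ofFn e₁ = d 0 :: List.ofFn (fun i : Fin n => e₁ i.succ) := by
      rw [List.ofFn_succ]
      simp only [e₁, Function.comp_apply, hρ0, hj]
    rw [hd', he'] at h'
    have htail := (List.perm_cons (d 0)).mp h'
    obtain ⟨σ', hσ'⟩ := ih (fun i : Fin n => d i.succ) (fun i : Fin n => e₁ i.succ) htail
    -- build τ with τ 0 = 0, τ i.succ = (σ' i).succ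
    let τ : Equiv.Perm (Fin (n+1)) :=
      (finSuccEquiv n).trans ((Equiv.optionCongr σ').trans (finSuccEquiv n).symm)
    have hτ0 : τ 0 = 0 := by simp [τ]
    have hτs : ∀ i : Fin n, τ i.succ = (σ' i).succ := by intro i; simp [τ]
    refine ⟨τ.trans ρ, funext fun i => ?_⟩
    refine Fin.cases ?_ (fun i => ?_) i
    · simp [Equiv.trans_apply, hτ0, hρ0, hj]
    · have := congrFun hσ' i
      simp only [Function.comp_apply] at this ⊢
      rw [Equiv.trans_apply, hτs i]
      simpa [e₁] using this

section aux
open Polynomial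
variable {n : ℕ}



lemma map_one_C : (1 : Matrix (Fin n) (Fin n) ℝ).map (C : ℝ →+* ℝ[X]) = 1 :=
  Matrix.map_one _ (map_zero C) (map_one C)

lemma charpoly_conj (V A : Matrix (Fin n) (Fin n) ℝ)
    (h1 : V * Vᵀ = 1) (h2 : Vᵀ * V = 1) : (V * A * Vᵀ).charpoly = A.charpoly := by
  classical
  set V' : Matrix (Fin n) (Fin n) ℝ[X] := V.map C with hV'
  have hVt : (Vᵀ).map (C : ℝ →+* ℝ[X]) = V'ᵀ := (Matrix.transpose_map).symm
  have h1' : V' * V'ᵀ = 1 := by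
    rw [hV', ← hVt, ← Matrix.map_mul, h1, map_one_C]
  have hone : (Matrix.scalar (Fin n) (X : ℝ[X])) = (X : ℝ[X]) • (1 : Matrix (Fin n) (Fin n) ℝ[X]) := by
    ext i j
    simp [Matrix.scalar_apply, Matrix.diagonal_apply, Matrix.one_apply, mul_ite]
  have key : charmatrix (V * A * Vᵀ) = V' * charmatrix A * V'ᵀ := by
    unfold charmatrix
    simp only [RingHom.mapMatrix_apply]
    rw [Matrix.map_mul, Matrix.map_mul, hVt, Matrix.mul_sub, Matrix.sub_mul, hone,
      mul_smul_comm, smul_mul_assoc]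
    rw [mul_one, h1', ← hV']
  unfold Matrix.charpoly
  rw [key, Matrix.det_mul, Matrix.det_mul]
  have : V'.det * (charmatrix A).det * V'ᵀ.det = (charmatrix A).det * (V'.det * V'ᵀ.det) := by ring
  rw [this, ← Matrix.det_mul, h1', Matrix.det_one, mul_one]

lemma charpoly_diagonal (a : Fin n → ℝ) :
    (Matrix.diagonal a).charpoly = ∏ i, (X - C (a i)) := by
  classical
  have : charmatrix (Matrix.diagonal a) = Matrix.diagonal (fun i => X - C (a i)) := by
    refine Matrix.ext fun i j => ?_
    rcases eq_or_ne i j with rfl | h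
    · simp
    · rw [Matrix.charmatrix_apply_ne _ i j h, Matrix.diagonal_apply_ne _ h]
      rw [Matrix.diagonal_apply_ne _ h]
      simp
  rw [Matrix.charpoly, this, Matrix.det_diagonal]

lemma multiset_eq_of_conj {a b : Fin n → ℝ} {U V : Matrix (Fin n) (Fin n) ℝ}
    (hU1 : U * Uᵀ = 1) (hU2 : Uᵀ * U = 1) (hV1 : V * Vᵀ = 1) (hV2 : Vᵀ * V = 1)
    (h : U * Matrix.diagonal a * Uᵀ = V * Matrix.diagonal b * Vᵀ) :
    ∃ σ : Equiv.Perm (Fin n), a = b ∘ σ := by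
  classical
  have e1 := charpoly_conj U (Matrix.diagonal a) hU1 hU2
  have e2 := charpoly_conj V (Matrix.diagonal b) hV1 hV2
  have hcp : (Matrix.diagonal a).charpoly = (Matrix.diagonal b).charpoly := by
    rw [← e1, h, e2]
  rw [charpoly_diagonal, charpoly_diagonal] at hcp
  have ha : (univ.val.map a) = (univ.val.map b) := by
    have := congrArg Polynomial.roots hcp
    have hca : (fun i => X - C (a i)) = (fun r => X - C r) ∘ a := rfl
    have hcb : (fun i => X - C (b i)) = (fun r => X - C r) ∘ b := rfl
    rwa [Finset.prod_eq_multiset_prod, Finset.prod_eq_multiset_prod, hca, hcb,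
      ← Multiset.map_map (fun r => X - C r) a, ← Multiset.map_map (fun r => X - C r) b,
      Polynomial.roots_multiset_prod_X_sub_C, Polynomial.roots_multiset_prod_X_sub_C] at this
  rw [Fin.univ_val_map, Fin.univ_val_map, Multiset.coe_eq_coe] at ha
  exact exists_comp_perm_of_ofFn_perm a b ha



lemma conj_diag_apply (M : Matrix (Fin n) (Fin n) ℝ) (d : Fin n → ℝ) (i k : Fin n) :
    (M * Matrix.diagonal d * Mᵀ) i k = ∑ j, M i j * d j * M k j := by
  rw [Matrix.mul_apply]
  simp only [Matrix.mul_diagonal, Matrix.transpose_apply]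

lemma conj_diag_submatrix (U : Matrix (Fin n) (Fin n) ℝ) (τ : Equiv.Perm (Fin n))
    (a : Fin n → ℝ) :
    (U.submatrix id ⇑τ) * Matrix.diagonal (a ∘ ⇑τ) * (U.submatrix id ⇑τ)ᵀ
      = U * Matrix.diagonal a * Uᵀ := by
  refine Matrix.ext fun i k => ?_
  rw [conj_diag_apply, conj_diag_apply]
  exact Equiv.sum_comp τ (fun j => U i j * a j * U k j)

lemma submatrix_orth {U : Matrix (Fin n) (Fin n) ℝ} (τ : Equiv.Perm (Fin n))
    (h1 : U * Uᵀ = 1) (h2 : Uᵀ * U = 1) :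
    (U.submatrix id ⇑τ) * (U.submatrix id ⇑τ)ᵀ = 1 ∧
      (U.submatrix id ⇑τ)ᵀ * (U.submatrix id ⇑τ) = 1 := by
  constructor
  · refine Matrix.ext fun i k => ?_
    have : ((U.submatrix id ⇑τ) * (U.submatrix id ⇑τ)ᵀ) i k
        = ∑ j, U i (τ j) * U k (τ j) := by
      simp [Matrix.mul_apply, Matrix.transpose_apply]
    rw [this, Equiv.sum_comp τ (fun j => U i j * U k j)]
    have : (U * Uᵀ) i k = ∑ j, U i j * U k j := by
      simp [Matrix.mul_apply, Matrix.transpose_apply]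
    rw [← this, h1]
  · refine Matrix.ext fun j k => ?_
    have : ((U.submatrix id ⇑τ)ᵀ * (U.submatrix id ⇑τ)) j k
        = (Uᵀ * U) (τ j) (τ k) := by
      simp [Matrix.mul_apply, Matrix.transpose_apply]
    rw [this, h2]
    simp [Matrix.one_apply, EmbeddingLike.apply_eq_iff_eq]

lemma isHermitian_conj_diag (W : Matrix (Fin n) (Fin n) ℝ) (d : Fin n → ℝ) :
    (W * Matrix.diagonal d * Wᵀ).IsHermitian := by
  have : (W * Matrix.diagonal d * Wᵀ)ᵀ = W * Matrix.diagonal d * Wᵀ := by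
    rw [Matrix.transpose_mul, Matrix.transpose_mul, Matrix.transpose_transpose,
      Matrix.diagonal_transpose, Matrix.mul_assoc]
  rw [Matrix.IsHermitian, Matrix.conjTranspose_eq_transpose_of_trivial, this]

lemma star_eq_transpose_real (M : Matrix (Fin n) (Fin n) ℝ) : star M = Mᵀ := by
  rw [Matrix.star_eq_conjTranspose, Matrix.conjTranspose_eq_transpose_of_trivial]

lemma exists_perm_sortDesc' (x : Fin n → ℝ) :
    ∃ σ : Equiv.Perm (Fin n), sortDesc x = x ∘ σ :=
  ⟨Fin.revPerm.trans (Tuple.sort x), rfl⟩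

lemma eigsDesc_of_isHermitian {X : Matrix (Fin n) (Fin n) ℝ} (hX : X.IsHermitian) :
    eigsDesc X = sortDesc hX.eigenvalues := by
  rw [eigsDesc, dif_pos hX]

lemma exists_orth_decomp {X : Matrix (Fin n) (Fin n) ℝ} (hX : X.IsHermitian) :
    ∃ W : Matrix (Fin n) (Fin n) ℝ, W * Wᵀ = 1 ∧ Wᵀ * W = 1 ∧
      X = W * Matrix.diagonal (eigsDesc X) * Wᵀ := by
  classical
  set U₀ : Matrix (Fin n) (Fin n) ℝ := (hX.eigenvectorUnitary : Matrix (Fin n) (Fin n) ℝ)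
  have hU1 : U₀ * U₀ᵀ = 1 := by
    rw [← star_eq_transpose_real]
    exact (Matrix.mem_unitaryGroup_iff).mp hX.eigenvectorUnitary.2
  have hU2 : U₀ᵀ * U₀ = 1 := by
    rw [← star_eq_transpose_real]
    exact (Matrix.mem_unitaryGroup_iff').mp hX.eigenvectorUnitary.2
  have hspec : X = U₀ * Matrix.diagonal hX.eigenvalues * U₀ᵀ := by
    have := hX.spectral_theorem
    rwa [RCLike.ofReal_real_eq_id, Function.id_comp, Unitary.conjStarAlgAut_apply, star_eq_transpose_real] at this
  obtain ⟨τ, hτ⟩ := exists_perm_sortDesc' hX.eigenvalues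
  refine ⟨U₀.submatrix id ⇑τ, (submatrix_orth τ hU1 hU2).1, (submatrix_orth τ hU1 hU2).2, ?_⟩
  rw [eigsDesc_of_isHermitian hX, hτ, conj_diag_submatrix, ← hspec]

end aux

section aux2
variable {n : ℕ}

lemma eigsDesc_conj {W : Matrix (Fin n) (Fin n) ℝ} {d : Fin n → ℝ}
    (hW1 : W * Wᵀ = 1) (hW2 : Wᵀ * W = 1) (hd : Antitone d) :
    eigsDesc (W * Matrix.diagonal d * Wᵀ) = d := by
  obtain ⟨W₁, hA, hB, hdec⟩ := exists_orth_decomp (isHermitian_conj_diag W d)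
  obtain ⟨σ, hσ⟩ := multiset_eq_of_conj hA hB hW1 hW2 hdec.symm
  have hanti : Antitone (eigsDesc (W * Matrix.diagonal d * Wᵀ)) := by
    rw [eigsDesc_of_isHermitian (isHermitian_conj_diag W d)]
    exact antitone_sortDesc _
  calc eigsDesc (W * Matrix.diagonal d * Wᵀ)
      = sortDesc (eigsDesc (W * Matrix.diagonal d * Wᵀ)) :=
        (sortDesc_eq_self_of_antitone hanti).symm
    _ = sortDesc (d ∘ σ) := by rw [hσ]
    _ = sortDesc d := sortDesc_comp_perm d σ
    _ = d := sortDesc_eq_self_of_antitone hd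

lemma frob_eq_trace (B : Matrix (Fin n) (Fin n) ℝ) :
    ∑ i, ∑ j, (B i j)^2 = Matrix.trace (Bᵀ * B) := by
  rw [Matrix.trace]
  simp only [Matrix.diag, Matrix.mul_apply, Matrix.transpose_apply, sq]
  exact Finset.sum_comm

lemma frob_conj (V A : Matrix (Fin n) (Fin n) ℝ) (h2 : Vᵀ * V = 1) :
    ∑ i, ∑ j, ((V * A * Vᵀ) i j)^2 = ∑ i, ∑ j, (A i j)^2 := by
  rw [frob_eq_trace, frob_eq_trace]
  have ht : (V * A * Vᵀ)ᵀ = V * Aᵀ * Vᵀ := by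
    rw [Matrix.transpose_mul, Matrix.transpose_mul, Matrix.transpose_transpose,
      Matrix.mul_assoc]
  rw [ht]
  simp only [Matrix.mul_assoc]
  rw [show Vᵀ * (V * (A * Vᵀ)) = A * Vᵀ from by
    rw [← Matrix.mul_assoc, h2, Matrix.one_mul]]
  rw [Matrix.trace_mul_comm]
  simp only [Matrix.mul_assoc]
  rw [h2, Matrix.mul_one]

lemma frob_diag (u : Fin n → ℝ) :
    ∑ i, ∑ j, (Matrix.diagonal u i j)^2 = ∑ i, (u i)^2 := by
  refine Finset.sum_congr rfl fun i _ => ?_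
  simp [Matrix.diagonal_apply, apply_ite (· ^ (2:ℕ))]

lemma diag_le_frob (B : Matrix (Fin n) (Fin n) ℝ) :
    ∑ i, (B i i)^2 ≤ ∑ i, ∑ j, (B i j)^2 :=
  Finset.sum_le_sum fun i _ =>
    Finset.single_le_sum (f := fun j => (B i j)^2) (fun j _ => sq_nonneg _) (Finset.mem_univ i)

lemma sum_sq_sortDesc_le (x b : Fin n → ℝ) (hb : Antitone b) :
    ∑ i, (sortDesc x i - b i)^2 ≤ ∑ i, (x i - b i)^2 := by
  obtain ⟨τ, hτ⟩ := exists_perm_sortDesc' x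
  have expand : ∀ u : Fin n → ℝ,
      ∑ i, (u i - b i)^2 = ∑ i, (u i)^2 - 2 * ∑ i, u i * b i + ∑ i, (b i)^2 := by
    intro u
    rw [Finset.sum_congr rfl
      (fun i (_ : i ∈ Finset.univ) =>
        (by ring : (u i - b i)^2 = ((u i)^2 - 2 * (u i * b i)) + (b i)^2)),
      Finset.sum_add_distrib, Finset.sum_sub_distrib, ← Finset.mul_sum]
  have hsq : ∑ i, (sortDesc x i)^2 = ∑ i, (x i)^2 := by
    rw [hτ]
    exact Equiv.sum_comp τ (fun i => (x i)^2)
  have hmono : Monovary (sortDesc x) b := (antitone_sortDesc x).monovary hb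
  have hre : ∑ i, x i * b i ≤ ∑ i, sortDesc x i * b i := by
    have h1 : ∑ i, x i * b i = ∑ i, sortDesc x i * b (τ i) := by
      rw [← Equiv.sum_comp τ (fun i => x i * b i)]
      refine Finset.sum_congr rfl fun i _ => ?_
      rw [hτ]
      rfl
    rw [h1]
    exact hmono.sum_mul_comp_perm_le_sum_mul
  rw [expand, expand, hsq]
  linarith

end aux2

section aux3
variable {n : ℕ}


lemma permMatrix_mulVec (σ : Equiv.Perm (Fin n)) (z : Fin n → ℝ) :
    (σ.permMatrix ℝ) *ᵥ z = z ∘ σ := by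
  funext i
  simp only [Equiv.Perm.permMatrix, Matrix.mulVec, dotProduct,
    PEquiv.toMatrix_apply, Equiv.toPEquiv_apply, Option.mem_def, Option.some.injEq]
  rw [Finset.sum_eq_single (σ i)]
  · simp
  · intro b _ hb
    simp [Ne.symm hb]
  · simp

lemma mulVec_mem_of_doublyStochastic {S : Set (Fin n → ℝ)} {f : (Fin n → ℝ) → ℝ}
    (hconv : ConvexOn ℝ S f)
    (hsymm : ∀ (e : Equiv.Perm (Fin n)) (x : Fin n → ℝ), x ∈ S →
      (x ∘ ⇑e) ∈ S ∧ f (x ∘ ⇑e) = f x)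
    {z : Fin n → ℝ} (hz : z ∈ S) {Q : Matrix (Fin n) (Fin n) ℝ}
    (hQ : Q ∈ doublyStochastic ℝ (Fin n)) :
    Q *ᵥ z ∈ S ∧ f (Q *ᵥ z) ≤ f z := by
  classical
  let L : Matrix (Fin n) (Fin n) ℝ →ₗ[ℝ] (Fin n → ℝ) :=
    { toFun := fun M => M *ᵥ z
      map_add' := fun M N => Matrix.add_mulVec M N z
      map_smul' := fun c M => Matrix.smul_mulVec c M z }
  have hQ' : Q ∈ convexHull ℝ {σ.permMatrix ℝ | σ : Equiv.Perm (Fin n)} := by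
    rwa [← doublyStochastic_eq_convexHull_permMatrix]
  have himg : L Q ∈ convexHull ℝ (L '' {σ.permMatrix ℝ | σ : Equiv.Perm (Fin n)}) := by
    rw [← LinearMap.image_convexHull]
    exact Set.mem_image_of_mem L hQ'
  have hT : Convex ℝ {x ∈ S | f x ≤ f z} := hconv.convex_le (f z)
  have hsub : L '' {σ.permMatrix ℝ | σ : Equiv.Perm (Fin n)} ⊆ {x ∈ S | f x ≤ f z} := by
    rintro _ ⟨M, ⟨σ, rfl⟩, rfl⟩
    have : L (σ.permMatrix ℝ) = z ∘ σ := permMatrix_mulVec σ z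
    rw [this]
    exact ⟨(hsymm σ z hz).1, le_of_eq (hsymm σ z hz).2⟩
  have := convexHull_min hsub hT himg
  exact ⟨this.1, this.2⟩

lemma sq_doublyStochastic {M : Matrix (Fin n) (Fin n) ℝ}
    (h1 : M * Mᵀ = 1) (h2 : Mᵀ * M = 1) :
    (Matrix.of fun i j => (M i j)^2) ∈ doublyStochastic ℝ (Fin n) := by
  rw [mem_doublyStochastic_iff_sum]
  refine ⟨fun i j => sq_nonneg _, fun i => ?_, fun j => ?_⟩
  · have : (M * Mᵀ) i i = ∑ j, (M i j)^2 := by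
      simp [Matrix.mul_apply, Matrix.transpose_apply, sq]
    rw [show ∑ j, (Matrix.of fun i j => (M i j)^2) i j = ∑ j, (M i j)^2 from rfl, ← this, h1]
    simp
  · have : (Mᵀ * M) j j = ∑ i, (M i j)^2 := by
      simp [Matrix.mul_apply, Matrix.transpose_apply, sq]
    rw [show ∑ i, (Matrix.of fun i j => (M i j)^2) i j = ∑ i, (M i j)^2 from rfl, ← this, h2]
    simp

lemma diag_conj_eq_mulVec (M : Matrix (Fin n) (Fin n) ℝ) (d : Fin n → ℝ) (i : Fin n) :
    (M * Matrix.diagonal d * Mᵀ) i i = (((Matrix.of fun i j => (M i j)^2)) *ᵥ d) i := by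
  rw [show (M * Matrix.diagonal d * Mᵀ) i i = ∑ j, M i j * d j * M i j from by
    rw [Matrix.mul_apply]; simp only [Matrix.mul_diagonal, Matrix.transpose_apply]]
  simp only [Matrix.mulVec, dotProduct, Matrix.of_apply]
  exact Finset.sum_congr rfl fun j _ => by ring

end aux3


lemma sInf_image_closure {α : Type*} [TopologicalSpace α] {g : α → ℝ} (hg : Continuous g)
    {A : Set α} (hA : A.Nonempty) (hpos : ∀ a, 0 ≤ g a) :
    sInf (g '' closure A) = sInf (g '' A) := by
  have h1 : g '' A ⊆ g '' closure A := Set.image_mono subset_closure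
  have h2 : g '' closure A ⊆ closure (g '' A) := image_closure_subset_closure_image hg
  have hbdd : BddBelow (g '' closure A) := ⟨0, by rintro r ⟨a, _, rfl⟩; exact hpos a⟩
  have hbddA : BddBelow (g '' A) := hbdd.mono h1
  refine le_antisymm (csInf_le_csInf hbdd (hA.image g) h1) ?_
  refine le_csInf ((hA.mono subset_closure).image g) fun b hb => ?_
  have : b ∈ closure (g '' A) := h2 hb
  have hsub : g '' A ⊆ Set.Ici (sInf (g '' A)) := fun y hy => csInf_le hbddA hy
  exact closure_minimal hsub isClosed_Ici this

/-- For a proper convex symmetric function `f` (value `f` on its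
domain `S`, `+∞` outside), the Euclidean distance from `(tb, vb, Xb)` to the spectral
matrix cone `K_F` equals the Euclidean distance from `(tb, vb, λ(Xb))` to the spectral
vector cone `K_f`, where `λ(Xb)` is the vector of eigenvalues of the symmetric matrix
`Xb` in nonincreasing order. -/
theorem stmt3 {n : ℕ} (S : Set (Fin n → ℝ)) (f : (Fin n → ℝ) → ℝ)
    (hproper : S.Nonempty) (hconv : ConvexOn ℝ S f)
    (hsymm : ∀ (e : Equiv.Perm (Fin n)) (x : Fin n → ℝ), x ∈ S →
      (x ∘ ⇑e) ∈ S ∧ f (x ∘ ⇑e) = f x)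
    (tb vb : ℝ) (Xb : Matrix (Fin n) (Fin n) ℝ) (hXb : Xb.IsHermitian) :
    sInf {r : ℝ | ∃ p ∈ matCone S f,
        r = Real.sqrt ((p.1 - tb) ^ 2 + (p.2.1 - vb) ^ 2 +
              ∑ i, ∑ j, (p.2.2 i j - Xb i j) ^ 2)} =
    sInf {r : ℝ | ∃ p ∈ vecCone S f,
        r = Real.sqrt ((p.1 - tb) ^ 2 + (p.2.1 - vb) ^ 2 +
              ∑ i, (p.2.2 i - eigsDesc Xb i) ^ 2)} := by
  classical
  obtain ⟨x₀, hx₀⟩ := hproper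
  obtain ⟨W, hW1, hW2, hWdec⟩ := exists_orth_decomp hXb
  have hlbanti : Antitone (eigsDesc Xb) := by
    rw [eigsDesc_of_isHermitian hXb]; exact antitone_sortDesc _
  set Am : Set (ℝ × ℝ × Matrix (Fin n) (Fin n) ℝ) :=
    {p | p.2.2.IsHermitian ∧ 0 < p.2.1 ∧ p.2.1⁻¹ • eigsDesc p.2.2 ∈ S ∧
      p.2.1 * f (p.2.1⁻¹ • eigsDesc p.2.2) ≤ p.1} with hAm
  set Av : Set (ℝ × ℝ × (Fin n → ℝ)) :=
    {p | 0 < p.2.1 ∧ p.2.1⁻¹ • p.2.2 ∈ S ∧ p.2.1 * f (p.2.1⁻¹ • p.2.2) ≤ p.1} with hAv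
  set gm : ℝ × ℝ × Matrix (Fin n) (Fin n) ℝ → ℝ := fun p =>
    Real.sqrt ((p.1 - tb) ^ 2 + (p.2.1 - vb) ^ 2 +
      ∑ i, ∑ j, (p.2.2 i j - Xb i j) ^ 2) with hgm
  set gv : ℝ × ℝ × (Fin n → ℝ) → ℝ := fun p =>
    Real.sqrt ((p.1 - tb) ^ 2 + (p.2.1 - vb) ^ 2 +
      ∑ i, (p.2.2 i - eigsDesc Xb i) ^ 2) with hgv
  have em : {r : ℝ | ∃ p ∈ matCone S f,
        r = Real.sqrt ((p.1 - tb) ^ 2 + (p.2.1 - vb) ^ 2 +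
              ∑ i, ∑ j, (p.2.2 i j - Xb i j) ^ 2)} = gm '' closure Am :=
    Set.ext fun r => ⟨fun ⟨p, hp, h⟩ => ⟨p, hp, h.symm⟩, fun ⟨p, hp, h⟩ => ⟨p, hp, h.symm⟩⟩
  have ev : {r : ℝ | ∃ p ∈ vecCone S f,
        r = Real.sqrt ((p.1 - tb) ^ 2 + (p.2.1 - vb) ^ 2 +
              ∑ i, (p.2.2 i - eigsDesc Xb i) ^ 2)} = gv '' closure Av :=
    Set.ext fun r => ⟨fun ⟨p, hp, h⟩ => ⟨p, hp, h.symm⟩, fun ⟨p, hp, h⟩ => ⟨p, hp, h.symm⟩⟩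
  have hgmc : Continuous gm := by
    apply Real.continuous_sqrt.comp
    apply Continuous.add
    apply Continuous.add
    · exact (continuous_fst.sub continuous_const).pow 2
    · exact ((continuous_fst.comp continuous_snd).sub continuous_const).pow 2
    · refine continuous_finset_sum _ fun i _ => continuous_finset_sum _ fun j _ => ?_
      exact ((((continuous_snd.comp continuous_snd)).matrix_elem i j).sub continuous_const).pow 2
  have hgvc : Continuous gv := by
    apply Real.continuous_sqrt.comp
    apply Continuous.add
    apply Continuous.add
    · exact (continuous_fst.sub continuous_const).pow 2
    · exact ((continuous_fst.comp continuous_snd).sub continuous_const).pow 2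
    · refine continuous_finset_sum _ fun i _ => ?_
      exact (((continuous_apply i).comp (continuous_snd.comp continuous_snd)).sub
        continuous_const).pow 2
  -- direction: from a vector-side point produce a matrix-side point with smaller distance
  have hb : ∀ r ∈ gv '' Av, ∃ r' ∈ gm '' Am, r' ≤ r := by
    rintro r ⟨⟨t, v, x⟩, hmem, rfl⟩
    obtain ⟨hv₀, hxS₀, hft₀⟩ := hmem
    have hv : 0 < v := hv₀
    have hxS : v⁻¹ • x ∈ S := hxS₀
    have hft : v * f (v⁻¹ • x) ≤ t := hft₀
    obtain ⟨τ, hτ⟩ := exists_perm_sortDesc' x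
    have hsanti := antitone_sortDesc x
    set X : Matrix (Fin n) (Fin n) ℝ := W * Matrix.diagonal (sortDesc x) * Wᵀ with hXdef
    have hXH : X.IsHermitian := isHermitian_conj_diag W (sortDesc x)
    have heigs : eigsDesc X = sortDesc x := eigsDesc_conj hW1 hW2 hsanti
    have hsmul : v⁻¹ • sortDesc x = (v⁻¹ • x) ∘ ⇑τ := by rw [hτ]; rfl
    have hS' := hsymm τ (v⁻¹ • x) hxS
    refine ⟨gm (t, v, X), ⟨(t, v, X), ⟨hXH, hv, ?_, ?_⟩, rfl⟩, ?_⟩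
    · show v⁻¹ • eigsDesc X ∈ S
      rw [heigs, hsmul]; exact hS'.1
    · show v * f (v⁻¹ • eigsDesc X) ≤ t
      rw [heigs, hsmul, hS'.2]; exact hft
    · show Real.sqrt _ ≤ Real.sqrt _
      apply Real.sqrt_le_sqrt
      have hfr : ∑ i, ∑ j, (X i j - Xb i j)^2 ≤ ∑ i, (x i - eigsDesc Xb i)^2 := by
        have hdd : Matrix.diagonal (sortDesc x - eigsDesc Xb)
            = Matrix.diagonal (sortDesc x) - Matrix.diagonal (eigsDesc Xb) := by
          refine Matrix.ext fun i j => ?_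
          rcases eq_or_ne i j with rfl | h
          · simp [Matrix.sub_apply]
          · simp [Matrix.diagonal_apply_ne _ h, Matrix.sub_apply]
        have hXsub : X - Xb = W * Matrix.diagonal (sortDesc x - eigsDesc Xb) * Wᵀ := by
          rw [hdd, Matrix.mul_sub, Matrix.sub_mul, ← hXdef, ← hWdec]
        have h0 : ∑ i, ∑ j, (X i j - Xb i j)^2 = ∑ i, ∑ j, ((X - Xb) i j)^2 := by
          simp [Matrix.sub_apply]
        rw [h0, hXsub, frob_conj _ _ hW2, frob_diag]
        simpa [Pi.sub_apply] using sum_sq_sortDesc_le x (eigsDesc Xb) hlbanti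
      exact add_le_add_right hfr _
  -- direction: from a matrix-side point produce a vector-side point with smaller distance
  have hc : ∀ r ∈ gm '' Am, ∃ r' ∈ gv '' Av, r' ≤ r := by
    rintro r ⟨⟨t, v, X⟩, hmem, rfl⟩
    obtain ⟨hXH₀, hv₀, hzS₀, hft₀⟩ := hmem
    have hXH : X.IsHermitian := hXH₀
    have hv : 0 < v := hv₀
    have hzS : v⁻¹ • eigsDesc X ∈ S := hzS₀
    have hft : v * f (v⁻¹ • eigsDesc X) ≤ t := hft₀
    obtain ⟨U, hU1, hU2, hUdec⟩ := exists_orth_decomp hXH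
    set M : Matrix (Fin n) (Fin n) ℝ := Wᵀ * U with hM
    have hMt : Mᵀ = Uᵀ * W := by rw [hM, Matrix.transpose_mul, Matrix.transpose_transpose]
    have hM1 : M * Mᵀ = 1 := by
      rw [hM, hMt, Matrix.mul_assoc, ← Matrix.mul_assoc U, hU1, Matrix.one_mul, hW2]
    have hM2 : Mᵀ * M = 1 := by
      rw [hMt, hM, Matrix.mul_assoc, ← Matrix.mul_assoc W, hW1, Matrix.one_mul, hU2]
    set Q : Matrix (Fin n) (Fin n) ℝ := Matrix.of (fun i j => (M i j)^2) with hQdef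
    have hQ : Q ∈ doublyStochastic ℝ (Fin n) := sq_doublyStochastic hM1 hM2
    set y : Fin n → ℝ := Q *ᵥ eigsDesc X with hy
    have hWXW : Wᵀ * X * W = M * Matrix.diagonal (eigsDesc X) * Mᵀ := by
      conv_lhs => rw [hUdec]
      rw [hMt, hM]
      simp only [Matrix.mul_assoc]
    have hsm : v⁻¹ • y = Q *ᵥ (v⁻¹ • eigsDesc X) := by
      rw [hy, Matrix.mulVec_smul]
    have hmem2 := mulVec_mem_of_doublyStochastic hconv hsymm hzS hQ
    refine ⟨gv (t, v, y), ⟨(t, v, y), ⟨hv, ?_, ?_⟩, rfl⟩, ?_⟩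
    · show v⁻¹ • y ∈ S
      rw [hsm]; exact hmem2.1
    · show v * f (v⁻¹ • y) ≤ t
      rw [hsm]
      calc v * f (Q *ᵥ (v⁻¹ • eigsDesc X)) ≤ v * f (v⁻¹ • eigsDesc X) :=
            mul_le_mul_of_nonneg_left hmem2.2 hv.le
        _ ≤ t := hft
    · show Real.sqrt _ ≤ Real.sqrt _
      apply Real.sqrt_le_sqrt
      have hXbW : Wᵀ * Xb * W = Matrix.diagonal (eigsDesc Xb) := by
        conv_lhs => rw [hWdec]
        simp only [Matrix.mul_assoc]
        rw [hW2, Matrix.mul_one, ← Matrix.mul_assoc, hW2, Matrix.one_mul]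
      have hdiag : ∀ i, (Wᵀ * (X - Xb) * W) i i = y i - eigsDesc Xb i := by
        intro i
        have hsplit : Wᵀ * (X - Xb) * W = Wᵀ * X * W - Wᵀ * Xb * W := by
          rw [Matrix.mul_sub, Matrix.sub_mul]
        rw [hsplit, Matrix.sub_apply, hXbW, Matrix.diagonal_apply_eq, hWXW,
          diag_conj_eq_mulVec]
      have hfr : ∑ i, (y i - eigsDesc Xb i)^2 ≤ ∑ i, ∑ j, (X i j - Xb i j)^2 := by
        have h2' : (Wᵀ)ᵀ * Wᵀ = 1 := by rw [Matrix.transpose_transpose]; exact hW1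
        have hfc := frob_conj Wᵀ (X - Xb) h2'
        rw [Matrix.transpose_transpose] at hfc
        calc ∑ i, (y i - eigsDesc Xb i)^2 = ∑ i, ((Wᵀ * (X - Xb) * W) i i)^2 := by
              refine Finset.sum_congr rfl fun i _ => ?_; rw [hdiag i]
          _ ≤ ∑ i, ∑ j, ((Wᵀ * (X - Xb) * W) i j)^2 := diag_le_frob _
          _ = ∑ i, ∑ j, ((X - Xb) i j)^2 := hfc
          _ = ∑ i, ∑ j, (X i j - Xb i j)^2 := by simp [Matrix.sub_apply]
      exact add_le_add_right hfr _
  have hAv0 : (f x₀, 1, x₀) ∈ Av := by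
    refine ⟨one_pos, ?_, ?_⟩ <;> simp [hx₀]
  have hAv_ne : Av.Nonempty := ⟨_, hAv0⟩
  have hAm_ne : Am.Nonempty := by
    obtain ⟨r', hr', _⟩ := hb (gv (f x₀, 1, x₀)) (Set.mem_image_of_mem gv hAv0)
    obtain ⟨q, hq, _⟩ := hr'
    exact ⟨q, hq⟩
  rw [em, ev, sInf_image_closure hgmc hAm_ne (fun a => Real.sqrt_nonneg _),
    sInf_image_closure hgvc hAv_ne (fun a => Real.sqrt_nonneg _)]
  have hbddm : BddBelow (gm '' Am) := ⟨0, by rintro r ⟨a, _, rfl⟩; exact Real.sqrt_nonneg _⟩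
  have hbddv : BddBelow (gv '' Av) := ⟨0, by rintro r ⟨a, _, rfl⟩; exact Real.sqrt_nonneg _⟩
  apply le_antisymm
  · refine le_csInf (hAv_ne.image gv) fun b hbm => ?_
    obtain ⟨r', hr', hle⟩ := hb b hbm
    exact (csInf_le hbddm hr').trans hle
  · refine le_csInf (hAm_ne.image gm) fun b hbm => ?_
    obtain ⟨r', hr', hle⟩ := hc b hbm
    exact (csInf_le hbddv hr').trans hle
end

section
/- Let F : Sⁿ → ℝ ∪ {+∞} be the negative von Neumann entropy, F(X) = ∑_{i=1}^n λ_i(X) log λ_i(X) for X positive semidefinite (with the convention 0 log 0 = 0) and F(X) = +∞ otherwise. Then for every real symmetric n×n matrix Y, the Fenchel conjugate satisfies F*(Y) = sup{Tr(XY) − F(X) : X ∈ Sⁿ positive semidefinite} = Tr(exp(Y − I)), where exp is the matrix exponential and I the identity matrix. -/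
open Matrix Finset

open Polynomial

variable {n : ℕ}

lemma charpoly_conj_gen (P M : Matrix (Fin n) (Fin n) ℝ) (h : P * star P = 1) :
    (P * M * star P).charpoly = M.charpoly := by
  have h' : star P * P = 1 := mul_eq_one_comm.mp h
  have key : charmatrix (P * M * star P)
      = (C : ℝ →+* ℝ[X]).mapMatrix P * charmatrix M * (C : ℝ →+* ℝ[X]).mapMatrix (star P) := by
    unfold charmatrix
    rw [mul_sub, sub_mul]
    congr 1
    · rw [mul_assoc, (scalar_commute (X : ℝ[X]) (Commute.all _) _).eq, ← mul_assoc,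
        ← _root_.map_mul, h, _root_.map_one, one_mul]
    · rw [← _root_.map_mul, ← _root_.map_mul]
  have h2 : ((C : ℝ →+* ℝ[X]).mapMatrix P).det * ((C : ℝ →+* ℝ[X]).mapMatrix (star P)).det = 1 := by
    rw [← det_mul, ← _root_.map_mul, h, _root_.map_one, det_one]
  rw [Matrix.charpoly, Matrix.charpoly, key, det_mul, det_mul, mul_right_comm, h2, one_mul]

lemma charpoly_diag (d : Fin n → ℝ) :
    (Matrix.diagonal d).charpoly = ∏ i, (X - C (d i)) := by
  rw [Matrix.charpoly_of_upperTriangular _ ?_]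
  · simp
  · intro i j hij
    exact Matrix.diagonal_apply_ne _ (by simpa using hij.ne')

lemma sum_g_of_conj_diag (P M : Matrix (Fin n) (Fin n) ℝ) (h : P * star P = 1)
    (d : Fin n → ℝ) (hM : M = P * Matrix.diagonal d * star P) (g : ℝ → ℝ) :
    (M.charpoly.roots.map g).sum = ∑ i, g (d i) := by
  subst hM
  rw [charpoly_conj_gen _ _ h, charpoly_diag]
  have h3 : (∏ i, (X - C (d i)))
      = (Multiset.map (fun a => X - C a) (Multiset.map d univ.val)).prod := by
    rw [Multiset.map_map, Finset.prod_eq_multiset_prod]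
    rfl
  rw [h3, roots_multiset_prod_X_sub_C, Multiset.map_map, Finset.sum_eq_multiset_sum]
  rfl

lemma spectral_real (X : Matrix (Fin n) (Fin n) ℝ) (hX : X.IsHermitian) :
    X = (hX.eigenvectorUnitary : Matrix (Fin n) (Fin n) ℝ) * Matrix.diagonal hX.eigenvalues
        * star (hX.eigenvectorUnitary : Matrix (Fin n) (Fin n) ℝ) := by
  have := hX.spectral_theorem
  rwa [RCLike.ofReal_real_eq_id, Function.id_comp] at this

lemma unit_mul_star (X : Matrix (Fin n) (Fin n) ℝ) (hX : X.IsHermitian) :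
    (hX.eigenvectorUnitary : Matrix (Fin n) (Fin n) ℝ)
      * star (hX.eigenvectorUnitary : Matrix (Fin n) (Fin n) ℝ) = 1 :=
  (Matrix.mem_unitaryGroup_iff).mp hX.eigenvectorUnitary.2

lemma sum_g_eigs (X : Matrix (Fin n) (Fin n) ℝ) (hX : X.IsHermitian) (g : ℝ → ℝ) :
    ∑ i, g (hX.eigenvalues i) = (X.charpoly.roots.map g).sum :=
  (sum_g_of_conj_diag _ X (unit_mul_star X hX) _ (spectral_real X hX) g).symm

/-- transfer: if `X = U diag(d) U*` then `∑ g(λᵢ(X)) = ∑ g(dᵢ)`. -/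
lemma sum_g_eigs_eq (X : Matrix (Fin n) (Fin n) ℝ) (hX : X.IsHermitian)
    (P : Matrix (Fin n) (Fin n) ℝ) (hP : P * star P = 1) (d : Fin n → ℝ)
    (hXd : X = P * Matrix.diagonal d * star P) (g : ℝ → ℝ) :
    ∑ i, g (hX.eigenvalues i) = ∑ i, g (d i) := by
  rw [sum_g_eigs X hX g, sum_g_of_conj_diag P X hP d hXd g]

-- exponential of hermitian
lemma exp_hermitian (A : Matrix (Fin n) (Fin n) ℝ) (hA : A.IsHermitian) :
    NormedSpace.exp A = (hA.eigenvectorUnitary : Matrix (Fin n) (Fin n) ℝ)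
      * Matrix.diagonal (fun i => Real.exp (hA.eigenvalues i))
      * star (hA.eigenvectorUnitary : Matrix (Fin n) (Fin n) ℝ) := by
  have hU := unit_mul_star A hA
  have hUnit : IsUnit ((hA.eigenvectorUnitary : Matrix (Fin n) (Fin n) ℝ)) :=
    (Matrix.isUnit_iff_isUnit_det _).2 (IsUnit.of_mul_eq_one _ (by
      rw [← Matrix.det_mul, hU, Matrix.det_one]))
  have hinv : (hA.eigenvectorUnitary : Matrix (Fin n) (Fin n) ℝ)⁻¹
      = star (hA.eigenvectorUnitary : Matrix (Fin n) (Fin n) ℝ) := Matrix.inv_eq_right_inv hU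
  conv_lhs => rw [spectral_real A hA]
  have hc := Matrix.exp_conj (hA.eigenvectorUnitary : Matrix (Fin n) (Fin n) ℝ)
    (Matrix.diagonal hA.eigenvalues) hUnit
  rw [← hinv, hc, Matrix.exp_diagonal, hinv]
  congr 2
  rw [Pi.exp_def]
  funext i
  rw [← Real.exp_eq_exp_ℝ]

lemma sum_sortDesc (x : Fin n → ℝ) (g : ℝ → ℝ) :
    ∑ i, g (sortDesc x i) = ∑ i, g (x i) := by
  have he : ∀ i, sortDesc x i = x ((Fin.revPerm.trans (Tuple.sort x)) i) := fun i => rfl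
  simp_rw [he]
  exact Equiv.sum_comp (Fin.revPerm.trans (Tuple.sort x)) (fun i => g (x i))

lemma scalar_bound {t : ℝ} (ht : 0 ≤ t) (c : ℝ) :
    t * c - t * Real.log t ≤ Real.exp (c - 1) := by
  rcases ht.eq_or_lt with h | h
  · simp [← h]
    positivity
  · have h1 : (c - 1 - Real.log t) + 1 ≤ Real.exp (c - 1 - Real.log t) :=
      Real.add_one_le_exp _
    have h2 : t * (c - Real.log t) ≤ t * Real.exp (c - 1 - Real.log t) :=
      mul_le_mul_of_nonneg_left (by linarith) ht
    have h3 : t * Real.exp (c - 1 - Real.log t) = Real.exp (c - 1) := by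
      rw [Real.exp_sub, Real.exp_log h]
      field_simp
    nlinarith

lemma entry_conj_diag (W : Matrix (Fin n) (Fin n) ℝ) (d : Fin n → ℝ) (i : Fin n) :
    (star W * Matrix.diagonal d * W) i i = ∑ j, d j * (W j i)^2 := by
  rw [Matrix.mul_apply]
  refine Finset.sum_congr rfl fun j _ => ?_
  rw [Matrix.mul_diagonal]
  have : (star W : Matrix (Fin n) (Fin n) ℝ) i j = W j i := rfl
  rw [this]; ring

lemma peierls (A : Matrix (Fin n) (Fin n) ℝ) (hA : A.IsHermitian)
    (U : Matrix (Fin n) (Fin n) ℝ) (hU : star U * U = 1) (i : Fin n) :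
    Real.exp ((star U * A * U) i i) ≤ (star U * NormedSpace.exp A * U) i i := by
  set V : Matrix (Fin n) (Fin n) ℝ := (hA.eigenvectorUnitary : Matrix (Fin n) (Fin n) ℝ) with hV
  have hVV : V * star V = 1 := unit_mul_star A hA
  set W : Matrix (Fin n) (Fin n) ℝ := star V * U with hW
  have hWW : star W * W = 1 := by
    rw [hW, StarMul.star_mul, star_star, mul_assoc, ← mul_assoc V, hVV, one_mul, hU]
  set w : Fin n → ℝ := fun j => (W j i)^2 with hw
  have hwsum : ∑ j, w j = 1 := by
    have : ∑ j, w j = (star W * W) i i := by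
      rw [Matrix.mul_apply]
      refine (Finset.sum_congr rfl fun j _ => ?_).symm
      have : (star W : Matrix (Fin n) (Fin n) ℝ) i j = W j i := rfl
      rw [this, hw]; ring
    rw [this, hWW]; simp
  have hAW : star U * A * U = star W * Matrix.diagonal hA.eigenvalues * W := by
    conv_lhs => rw [spectral_real A hA]
    rw [hW, StarMul.star_mul, star_star]
    noncomm_ring
  have hEW : star U * NormedSpace.exp A * U
      = star W * Matrix.diagonal (fun j => Real.exp (hA.eigenvalues j)) * W := by
    rw [exp_hermitian A hA, hW, StarMul.star_mul, star_star]
    noncomm_ring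
  rw [hAW, hEW, entry_conj_diag, entry_conj_diag]
  have jensen := convexOn_exp.map_sum_le (t := Finset.univ) (w := w)
    (p := hA.eigenvalues) (fun j _ => sq_nonneg _) hwsum (fun j _ => Set.mem_univ _)
  calc Real.exp (∑ j, hA.eigenvalues j * (W j i)^2)
      = Real.exp (∑ j, w j • hA.eigenvalues j) := by
        congr 1; exact Finset.sum_congr rfl fun j _ => by rw [hw]; simp [mul_comm]
    _ ≤ ∑ j, w j * Real.exp (hA.eigenvalues j) := jensen
    _ = ∑ j, Real.exp (hA.eigenvalues j) * (W j i)^2 := by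
        exact Finset.sum_congr rfl fun j _ => by rw [hw]; ring

lemma eigsDesc_entropy (X : Matrix (Fin n) (Fin n) ℝ) (hX : X.IsHermitian) :
    ∑ i, eigsDesc X i * Real.log (eigsDesc X i)
      = ∑ i, hX.eigenvalues i * Real.log (hX.eigenvalues i) := by
  have h1 : eigsDesc X = sortDesc hX.eigenvalues := dif_pos hX
  rw [h1]
  exact sum_sortDesc hX.eigenvalues (fun t => t * Real.log t)

lemma trace_diag_mul (d : Fin n → ℝ) (M : Matrix (Fin n) (Fin n) ℝ) :
    (Matrix.diagonal d * M).trace = ∑ i, d i * M i i := by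
  rw [Matrix.trace]
  refine Finset.sum_congr rfl fun i _ => ?_
  rw [Matrix.diag_apply, Matrix.diagonal_mul]

lemma upper_bound (Y : Matrix (Fin n) (Fin n) ℝ) (hY : Y.IsHermitian)
    (X : Matrix (Fin n) (Fin n) ℝ) (hX : X.PosSemidef) :
    (X * Y).trace - ∑ i, eigsDesc X i * Real.log (eigsDesc X i)
      ≤ (NormedSpace.exp (Y - 1)).trace := by
  have hXh := hX.1
  set U : Matrix (Fin n) (Fin n) ℝ := (hXh.eigenvectorUnitary : Matrix (Fin n) (Fin n) ℝ) with hUdef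
  have hUU : U * star U = 1 := unit_mul_star X hXh
  have hU'U : star U * U = 1 := mul_eq_one_comm.mp hUU
  set d : Fin n → ℝ := hXh.eigenvalues with hd
  -- trace (X*Y) = ∑ i, d i * (star U * Y * U) i i
  have htr : (X * Y).trace = ∑ i, d i * (star U * Y * U) i i := by
    conv_lhs => rw [spectral_real X hXh]
    rw [show (U * Matrix.diagonal d * star U * Y : Matrix (Fin n) (Fin n) ℝ)
        = U * (Matrix.diagonal d * (star U * Y * U) * star U) by
        rw [show Matrix.diagonal d * (star U * Y * U) * star U
            = Matrix.diagonal d * star U * Y * (U * star U) by noncomm_ring, hUU]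
        noncomm_ring,
      Matrix.trace_mul_comm U, show Matrix.diagonal d * (star U * Y * U) * star U * U
        = Matrix.diagonal d * (star U * Y * U) * (star U * U) by noncomm_ring, hU'U, mul_one,
      trace_diag_mul]
  have hEtr : (NormedSpace.exp (Y - 1)).trace
      = ∑ i, (star U * NormedSpace.exp (Y - 1) * U) i i := by
    rw [show ∑ i, (star U * NormedSpace.exp (Y - 1) * U) i i
        = (star U * NormedSpace.exp (Y - 1) * U).trace from rfl,
      Matrix.trace_mul_cycle, hUU, one_mul]
  have hA : (Y - 1).IsHermitian := hY.sub Matrix.isHermitian_one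
  rw [htr, eigsDesc_entropy X hXh, hEtr, ← Finset.sum_sub_distrib]
  refine Finset.sum_le_sum fun i _ => ?_
  have h1 : d i * (star U * Y * U) i i - d i * Real.log (d i)
      ≤ Real.exp ((star U * Y * U) i i - 1) :=
    scalar_bound (hX.eigenvalues_nonneg i) _
  refine h1.trans ?_
  have h2 : (star U * Y * U) i i - 1 = (star U * (Y - 1) * U) i i := by
    rw [show star U * (Y - 1) * U = star U * Y * U - star U * U by noncomm_ring, hU'U]
    simp [Matrix.sub_apply]
  rw [h2]
  exact peierls (Y - 1) hA U hU'U i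

lemma attained (Y : Matrix (Fin n) (Fin n) ℝ) (hY : Y.IsHermitian) :
    ∃ X : Matrix (Fin n) (Fin n) ℝ, X.PosSemidef ∧
      (X * Y).trace - ∑ i, eigsDesc X i * Real.log (eigsDesc X i)
        = (NormedSpace.exp (Y - 1)).trace := by
  have hA : (Y - 1).IsHermitian := hY.sub Matrix.isHermitian_one
  set V : Matrix (Fin n) (Fin n) ℝ := (hA.eigenvectorUnitary : Matrix (Fin n) (Fin n) ℝ) with hVdef
  have hVV : V * star V = 1 := unit_mul_star (Y - 1) hA
  have hV'V : star V * V = 1 := mul_eq_one_comm.mp hVV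
  set μ : Fin n → ℝ := hA.eigenvalues with hμ
  set X : Matrix (Fin n) (Fin n) ℝ := NormedSpace.exp (Y - 1) with hXdef
  have hXspec : X = V * Matrix.diagonal (fun i => Real.exp (μ i)) * star V :=
    exp_hermitian (Y - 1) hA
  have hpsd : X.PosSemidef := by
    rw [hXspec]
    exact (Matrix.posSemidef_diagonal_iff.mpr fun i => (Real.exp_pos _).le
      ).mul_mul_conjTranspose_same V
  refine ⟨X, hpsd, ?_⟩
  have hent : ∑ i, eigsDesc X i * Real.log (eigsDesc X i) = ∑ i, Real.exp (μ i) * μ i := by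
    rw [eigsDesc_entropy X hpsd.1,
      sum_g_eigs_eq X hpsd.1 V hVV _ hXspec (fun t => t * Real.log t)]
    exact Finset.sum_congr rfl fun i _ => by rw [Real.log_exp]
  have htr1 : (X * (Y - 1)).trace = ∑ i, Real.exp (μ i) * μ i := by
    have hY1 : Y - 1 = V * Matrix.diagonal μ * star V := spectral_real (Y - 1) hA
    rw [hXspec]
    conv_lhs => rw [hY1]
    rw [show V * Matrix.diagonal (fun i => Real.exp (μ i)) * star V
          * (V * Matrix.diagonal μ * star V)
        = V * (Matrix.diagonal (fun i => Real.exp (μ i)) * (star V * V) * Matrix.diagonal μ)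
          * star V by noncomm_ring, hV'V, mul_one,
      Matrix.diagonal_mul_diagonal, Matrix.trace_mul_cycle, hV'V, one_mul,
      Matrix.trace_diagonal]
  have hXY : (X * Y).trace = (X * (Y - 1)).trace + X.trace := by
    rw [show X * Y = X * (Y - 1) + X by noncomm_ring, Matrix.trace_add]
  rw [hXY, hent, htr1]
  ring


/-- Let `F` be the negative von Neumann entropy,
`F(X) = ∑ᵢ λᵢ(X) log λᵢ(X)` for `X` positive semidefinite (with `0 log 0 = 0`, which
holds automatically since `Real.log 0 = 0`) and `+∞` otherwise. Then for every real
symmetric matrix `Y`,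
`F*(Y) = sup {Tr(XY) − F(X) : X positive semidefinite} = Tr(exp(Y − I))`,
where `exp` is the matrix exponential. (The supremum is computed in `EReal`;
`Matrix.PosSemidef` includes symmetry.) -/
theorem stmt14 {n : ℕ} (Y : Matrix (Fin n) (Fin n) ℝ) (hY : Y.IsHermitian) :
    (⨆ X : {X : Matrix (Fin n) (Fin n) ℝ // X.PosSemidef},
        (((X.1 * Y).trace -
            ∑ i, eigsDesc X.1 i * Real.log (eigsDesc X.1 i) : ℝ) : EReal)) =
      (((NormedSpace.exp (Y - 1)).trace : ℝ) : EReal) := by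
  apply le_antisymm
  · refine iSup_le fun X => ?_
    exact_mod_cast upper_bound Y hY X.1 X.2
  · obtain ⟨X, hpsd, heq⟩ := attained Y hY
    refine le_iSup_of_le ⟨X, hpsd⟩ ?_
    exact_mod_cast heq.ge
end
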